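/- If I is a T-maximal ideal on ℕ, then for any A, B ∉ I there exists k ∈ ℤ with (A + k) ∩ B ∉ I. In particular, there is no I-translation-almost-disjoint family with more than one element, hence none of cardinality continuum. -/

import Mathlib

open Set Filter
open scoped Classical

/-- The shift of a set of naturals by an integer `k`, i.e. `(A + k) ∩ ℕ`. -/
def shiftSet (A : Set ℕ) (k : ℤ) : Set ℕ := {n : ℕ | ∃ a ∈ A, (a : ℤ) + k = (n : ℤ)}

/-- An ideal on ℕ. -/
def IsIdeal (I : Set (Set ℕ)) : Prop :=
  (∀ A B : Set ℕ, A ∈ I → B ∈ I → A ∪ B ∈ I) ∧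
  (∀ A B : Set ℕ, A ⊆ B → B ∈ I → A ∈ I) ∧
  (∀ A : Set ℕ, A.Finite → A ∈ I) ∧
  (Set.univ : Set ℕ) ∉ I

/-- A translation invariant ideal on ℕ. -/
def TransInvIdeal (I : Set (Set ℕ)) : Prop :=
  IsIdeal I ∧ ∀ A ∈ I, ∀ k : ℤ, shiftSet A k ∈ I

/-- An abstract upper density on ℕ. -/
def IsAUD (δ : Set ℕ → ℝ) : Prop :=
  (∀ A : Set ℕ, 0 ≤ δ A ∧ δ A ≤ 1) ∧
  δ Set.univ = 1 ∧
  (∀ A : Set ℕ, A.Finite → δ A = 0) ∧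
  (∀ A B : Set ℕ, A ⊆ B → δ A ≤ δ B) ∧
  (∀ A B : Set ℕ, δ (A ∪ B) ≤ δ A + δ B)

/-- A translation invariant density. -/
def TransInvAUD (δ : Set ℕ → ℝ) : Prop := ∀ (A : Set ℕ) (k : ℤ), δ (shiftSet A k) = δ A

/-- A rich density: onto [0,1]. -/
def Rich (δ : Set ℕ → ℝ) : Prop := ∀ r ∈ Set.Icc (0:ℝ) 1, ∃ A : Set ℕ, δ A = r

/-- The family of null sets of a density. -/
def ZSet (δ : Set ℕ → ℝ) : Set (Set ℕ) := {A | δ A = 0}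

/-- An `I`-almost disjoint family. -/
def IsADFamily (I : Set (Set ℕ)) (𝒜 : Set (Set ℕ)) : Prop :=
  (∀ A ∈ 𝒜, A ∉ I) ∧ ∀ A ∈ 𝒜, ∀ B ∈ 𝒜, A ≠ B → A ∩ B ∈ I

/-- An `I`-translation almost disjoint family. -/
def IsTADFamily (I : Set (Set ℕ)) (𝒜 : Set (Set ℕ)) : Prop :=
  (∀ A ∈ 𝒜, A ∉ I) ∧ ∀ A ∈ 𝒜, ∀ B ∈ 𝒜, A ≠ B → ∀ k : ℤ, A ∩ shiftSet B k ∈ I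

/-- A maximal ideal on ℕ. -/
def MaximalIdeal (I : Set (Set ℕ)) : Prop :=
  IsIdeal I ∧ ∀ J : Set (Set ℕ), IsIdeal J → I ⊆ J → I = J

/-- An ideal on a subset `X` of ℕ. -/
def IsIdealOn (X : Set ℕ) (I : Set (Set ℕ)) : Prop :=
  (∀ A ∈ I, A ⊆ X) ∧
  (∀ A B : Set ℕ, A ∈ I → B ∈ I → A ∪ B ∈ I) ∧
  (∀ A B : Set ℕ, A ⊆ B → B ∈ I → A ∈ I) ∧
  (∀ A : Set ℕ, A ⊆ X → A.Finite → A ∈ I) ∧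
  X ∉ I

/-- A maximal ideal on a subset `X` of ℕ. -/
def MaximalIdealOn (X : Set ℕ) (I : Set (Set ℕ)) : Prop :=
  IsIdealOn X I ∧ ∀ A : Set ℕ, A ⊆ X → (A ∈ I ∨ X \ A ∈ I)

/-- The translation-invariant kernel of an ideal. -/
def tIdeal (I : Set (Set ℕ)) : Set (Set ℕ) := {A | ∀ k : ℤ, shiftSet A k ∈ I}

/-- A T-maximal ideal: maximal among translation invariant ideals. -/
def TMaximalIdeal (I : Set (Set ℕ)) : Prop :=
  TransInvIdeal I ∧ ∀ J : Set (Set ℕ), TransInvIdeal J → I ⊆ J → I = J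

lemma ideal_biUnion (I : Set (Set ℕ)) (hI : IsIdeal I) (f : ℤ → Set ℕ) :
    ∀ F : Finset ℤ, (∀ k ∈ F, f k ∈ I) → (⋃ k ∈ F, f k) ∈ I := by
  intro F
  induction F using Finset.induction_on with
  | empty => intro _; simpa using hI.2.2.1 ∅ Set.finite_empty
  | insert _ _ hx ih =>
    intro h
    rw [Finset.set_biUnion_insert]
    exact hI.1 _ _ (h _ (Finset.mem_insert_self _ _))
      (ih fun k hk => h k (Finset.mem_insert_of_mem hk))

lemma tmax_key (I : Set (Set ℕ)) (hI : TMaximalIdeal I) :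
    ∀ A B : Set ℕ, A ∉ I → B ∉ I → ∃ k : ℤ, shiftSet A k ∩ B ∉ I := by
  intro A B hA hB
  by_contra h
  push_neg at h
  set J : Set (Set ℕ) := {C | ∃ F : Finset ℤ, C \ (⋃ k ∈ F, shiftSet A k) ∈ I} with hJdef
  have hIid : IsIdeal I := hI.1.1
  by_cases huniv : (Set.univ : Set ℕ) ∈ J
  · -- finitely many shifts of A cover ℕ mod I; then B ∈ I, contradiction
    obtain ⟨F, hF⟩ := huniv
    apply hB
    apply hIid.2.1 B ((⋃ k ∈ F, shiftSet A k ∩ B) ∪ (Set.univ \ ⋃ k ∈ F, shiftSet A k))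
    · intro n hn
      by_cases hc : n ∈ ⋃ k ∈ F, shiftSet A k
      · left
        obtain ⟨s, ⟨k, rfl⟩, hs⟩ := hc
        simp only [Set.mem_iUnion] at hs ⊢
        obtain ⟨hkF, hnk⟩ := hs
        exact ⟨k, hkF, hnk, hn⟩
      · exact Or.inr ⟨trivial, hc⟩
    · exact hIid.1 _ _ (ideal_biUnion I hIid _ F fun k _ => h k) hF
  · -- J is a translation invariant ideal extending I and containing A
    have hJid : IsIdeal J := by
      refine ⟨?_, ?_, ?_, huniv⟩
      · rintro C D ⟨F₁, h₁⟩ ⟨F₂, h₂⟩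
        refine ⟨F₁ ∪ F₂, hIid.2.1 _ _ ?_ (hIid.1 _ _ h₁ h₂)⟩
        rintro n ⟨hn, hn'⟩
        have hn1 : n ∉ ⋃ k ∈ F₁, shiftSet A k := by
          intro hc
          exact hn' (Set.biUnion_subset_biUnion_left (fun k hk =>
            Finset.mem_union_left _ hk) hc)
        have hn2 : n ∉ ⋃ k ∈ F₂, shiftSet A k := by
          intro hc
          exact hn' (Set.biUnion_subset_biUnion_left (fun k hk =>
            Finset.mem_union_right _ hk) hc)
        rcases hn with hn | hn
        · exact Or.inl ⟨hn, hn1⟩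
        · exact Or.inr ⟨hn, hn2⟩
      · rintro C D hCD ⟨F, hF⟩
        exact ⟨F, hIid.2.1 _ _ (Set.diff_subset_diff_left hCD) hF⟩
      · intro C hC
        exact ⟨∅, hIid.2.2.1 _ (hC.subset Set.diff_subset)⟩
    have hJti : TransInvIdeal J := by
      refine ⟨hJid, ?_⟩
      rintro C ⟨F, hF⟩ j
      refine ⟨F.image (· + j), hIid.2.1 _ _ ?_ (hI.1.2 _ hF j)⟩
      rintro n ⟨⟨c, hc, hcj⟩, hn⟩
      by_cases hcU : c ∈ ⋃ k ∈ F, shiftSet A k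
      · exfalso
        obtain ⟨s, ⟨k, rfl⟩, hs⟩ := hcU
        simp only [Set.mem_iUnion] at hs
        obtain ⟨hkF, a, ha, hak⟩ := hs
        apply hn
        simp only [Set.mem_iUnion]
        refine ⟨k + j, ?_, a, ha, by omega⟩
        exact Finset.mem_image.mpr ⟨k, hkF, rfl⟩
      · exact ⟨c, ⟨hc, hcU⟩, hcj⟩
    have hIJ : I ⊆ J := by
      intro C hC
      exact ⟨∅, by simpa using hC⟩
    have heq := hI.2 J hJti hIJ
    have hAJ : A ∈ J := by
      refine ⟨{0}, ?_⟩
      have : A \ (⋃ k ∈ ({0} : Finset ℤ), shiftSet A k) = ∅ := by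
        apply Set.eq_empty_of_forall_notMem
        rintro n ⟨hn, hn'⟩
        apply hn'
        simp only [Finset.mem_singleton, Set.mem_iUnion]
        exact ⟨0, rfl, n, hn, by ring⟩
      rw [this]
      exact hIid.2.2.1 _ Set.finite_empty
    rw [heq] at hA
    exact hA hAJ

theorem stmt14 (I : Set (Set ℕ)) (hI : TMaximalIdeal I) :
    (∀ A B : Set ℕ, A ∉ I → B ∉ I → ∃ k : ℤ, shiftSet A k ∩ B ∉ I) ∧
    (∀ 𝒜 : Set (Set ℕ), IsTADFamily I 𝒜 → 𝒜.Subsingleton) ∧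
    ¬ ∃ 𝒜 : Set (Set ℕ), IsTADFamily I 𝒜 ∧ Cardinal.mk 𝒜 = Cardinal.continuum := by
  have key := tmax_key I hI
  have part2 : ∀ 𝒜 : Set (Set ℕ), IsTADFamily I 𝒜 → 𝒜.Subsingleton := by
    intro 𝒜 h𝒜 A hA B hB
    by_contra hne
    obtain ⟨k, hk⟩ := key B A (h𝒜.1 B hB) (h𝒜.1 A hA)
    have := h𝒜.2 A hA B hB hne k
    exact hk (by rwa [Set.inter_comm] at this)
  refine ⟨key, part2, ?_⟩
  rintro ⟨𝒜, hTAD, hcard⟩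
  have h1 : Cardinal.mk 𝒜 ≤ 1 := Cardinal.mk_le_one_iff_set_subsingleton.mpr (part2 𝒜 hTAD)
  rw [hcard] at h1
  exact absurd h1 (not_le.mpr (Cardinal.one_lt_aleph0.trans Cardinal.aleph0_lt_continuum))
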